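/- Let A be a symmetric n×n real matrix, b ∈ ℝⁿ, f(x) = (1/2)⟨Ax, x⟩ − ⟨b, x⟩, and let L > 0 satisfy L ≥ max_{i,j} |A_{ij}|. For x ∈ ℝⁿ, let i* be an index maximizing |(Ax − b)_j| over j, and set x⁺ = x − (1/L)(Ax − b)_{i*}·e_{i*}. Then f(x⁺) ≤ f(x) − ‖Ax − b‖_∞²/(2L). -/

import Mathlib

/-- One step of the gradient method in the `ℓ₁`-norm: with `f x = (1/2)⟨Ax,x⟩ - ⟨b,x⟩`,
`A` symmetric, `L ≥ max_{i,j}|A_{ij}|`, `i*` a coordinate maximizing `|(Ax-b)_j|`, and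
`x⁺ = x - (1/L)(Ax-b)_{i*}•e_{i*}`, one has `f(x⁺) ≤ f(x) - ‖Ax-b‖_∞²/(2L)`. -/
theorem stmt3 {n : ℕ} (A : Matrix (Fin n) (Fin n) ℝ) (hA : A.IsSymm)
    (b : Fin n → ℝ) (L : ℝ) (hL : 0 < L) (hLmax : ∀ i j, |A i j| ≤ L)
    (f : (Fin n → ℝ) → ℝ)
    (hf : ∀ x, f x = (1 / 2) * (∑ i, A.mulVec x i * x i) - ∑ i, b i * x i)
    (x : Fin n → ℝ) (istar : Fin n)
    (histar : ∀ j, |A.mulVec x j - b j| ≤ |A.mulVec x istar - b istar|) :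
    f (x - ((A.mulVec x istar - b istar) / L) • (Pi.single istar 1 : Fin n → ℝ))
      ≤ f x - (|A.mulVec x istar - b istar|) ^ 2 / (2 * L) := by
  set g : ℝ := A.mulVec x istar - b istar with hg
  set c : ℝ := g / L with hc
  have hsym : ∀ i, A i istar = A istar i := fun i => by
    conv_lhs => rw [← hA]
    simp [Matrix.transpose_apply]
  have hmv : A.mulVec (x - c • (Pi.single istar 1 : Fin n → ℝ))
      = fun i => A.mulVec x i - c * A i istar := by
    funext i
    simp [Matrix.mulVec, dotProduct, mul_sub, Finset.sum_sub_distrib,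
      Pi.single_apply, mul_ite, Finset.mul_sum, mul_comm, mul_left_comm]
  have key : f (x - c • (Pi.single istar 1 : Fin n → ℝ))
      = f x - c * g + c ^ 2 * A istar istar / 2 := by
    rw [hf, hf, hmv]
    have h1 : ∑ i, (A.mulVec x i - c * A i istar) *
        (x - c • (Pi.single istar 1 : Fin n → ℝ)) i
        = (∑ i, A.mulVec x i * x i) - c * A.mulVec x istar
          - c * A.mulVec x istar + c ^ 2 * A istar istar := by
      have : ∀ i, (A.mulVec x i - c * A i istar) *
          (x - c • (Pi.single istar 1 : Fin n → ℝ)) i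
          = A.mulVec x i * x i - c * (A.mulVec x i * (Pi.single istar 1 : Fin n → ℝ) i)
            - c * (A istar i * x i)
            + c ^ 2 * (A istar istar * (Pi.single istar 1 : Fin n → ℝ) i * (Pi.single istar 1 : Fin n → ℝ) i) := by
        intro i
        rcases eq_or_ne i istar with h | h
        · subst h; simp [hsym i]; ring
        · simp [Pi.single_apply, h, hsym i]; ring
      rw [Finset.sum_congr rfl fun i _ => this i]
      simp only [Finset.sum_add_distrib, Finset.sum_sub_distrib, ← Finset.mul_sum]
      have e1 : ∑ i, A.mulVec x i * (Pi.single istar 1 : Fin n → ℝ) i = A.mulVec x istar := by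
        simp [Pi.single_apply, mul_ite]
      have e2 : ∑ i, A istar i * x i = A.mulVec x istar := by
        simp [Matrix.mulVec, dotProduct]
      have e3 : ∑ i, A istar istar * (Pi.single istar 1 : Fin n → ℝ) i * (Pi.single istar 1 : Fin n → ℝ) i
          = A istar istar := by
        simp [Pi.single_apply, mul_ite]
      rw [e1, e2, e3]
    have h2 : ∑ i, b i * (x - c • (Pi.single istar 1 : Fin n → ℝ)) i
        = (∑ i, b i * x i) - c * b istar := by
      simp only [Pi.sub_apply, Pi.smul_apply, smul_eq_mul, mul_sub,
        Finset.sum_sub_distrib]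
      congr 1
      simp [Pi.single_apply, mul_ite, mul_comm, Finset.mul_sum]
    rw [h1, h2]
    ring_nf
    rw [hg]
    ring
  rw [key]
  have hAii : A istar istar ≤ L := (abs_le.mp (hLmax istar istar)).2
  have habs : |g| ^ 2 = g ^ 2 := sq_abs g
  rw [habs, hc]
  have hg2 : (0:ℝ) ≤ g ^ 2 := sq_nonneg g
  have hL2 : (0:ℝ) < L ^ 2 := by positivity
  have hstep : (g / L) ^ 2 * A istar istar / 2 ≤ g ^ 2 / (2 * L) := by
    rw [div_pow]
    rw [div_le_div_iff₀ (by positivity) (by positivity)]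
    calc g ^ 2 / L ^ 2 * A istar istar * (2 * L) = (g ^ 2 * A istar istar) * (2 / L) := by
          field_simp
      _ ≤ (g ^ 2 * L) * (2 / L) := by
          have := mul_le_mul_of_nonneg_left hAii hg2
          exact mul_le_mul_of_nonneg_right this (by positivity)
      _ = g ^ 2 * 2 := by field_simp
  have hcg : g / L * g = g ^ 2 / L := by ring
  have e4 : g ^ 2 / L = g ^ 2 / (2 * L) + g ^ 2 / (2 * L) := by
    field_simp
    ring
  linarith [hstep, hcg, e4]
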